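/- If an infinite path w of the sink-extended KTS K_ι satisfies enc_ι(P), then there exists a unique finite path ẇ of K such that ẇ satisfies enc(P) and w = ẇ·ι^ω. -/

import Mathlib

set_option autoImplicit true

section IFCIL

variable {N O S A Pr : Type}

/-- Node patterns: a concrete node or the wildcard `*`. -/
inductive NodePat (N : Type) where
  | star : NodePat N
  | node : N → NodePat N

/-- An arc of an information flow diagram: source, nonempty set of operations, target. -/
abbrev Arc (N O : Type) := N × Set O × N

/-- An information flow diagram `I = (N, ta, E)`. -/
structure IFD (N O : Type) where
  ta : N → Set N
  E : Set (Arc N O)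

/-- A node pattern `m` matches a node `n`: `m = *` or `n ∈ ta(m)`. -/
def NodePat.mat (I : IFD N O) : NodePat N → N → Prop
  | .star, _ => True
  | .node m, n => n ∈ I.ta m

/-- Consecutive arcs have matching endpoints. -/
def Chained : List (Arc N O) → Prop
  | [] => True
  | [_] => True
  | a :: b :: rest => a.2.2 = b.1 ∧ Chained (b :: rest)

/-- A path in `I`: nonempty, chained sequence of arcs of `I`. -/
def PathIn (I : IFD N O) (π : List (Arc N O)) : Prop :=
  π ≠ [] ∧ Chained π ∧ ∀ a ∈ π, a ∈ I.E

/-- Arrows: single step `>` or multi step `+>`. -/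
inductive Arrow where
  | single : Arrow
  | multi : Arrow

/-- Path kinds `P ::= n [o]> n' | n +[o]> n' | P₁ P₂`. -/
inductive Kind (N O : Type) where
  | atom : NodePat N → Arrow → Set O → NodePat N → Kind N O
  | comp : Kind N O → Kind N O → Kind N O

/-- The kind satisfaction relation `π ▷_I P`. -/
inductive KSat (I : IFD N O) : List (Arc N O) → Kind N O → Prop where
  | step : NodePat.mat I m n → NodePat.mat I m' n' → (o ∩ o').Nonempty →
      KSat I [(n, o, n')] (.atom m .single o' m')
  | plusBase : KSat I [(n, o, n')] (.atom m .single o' m') →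
      KSat I [(n, o, n')] (.atom m .multi o' m')
  | plusStep : KSat I [(n, o, n')] (.atom m .single o' .star) →
      KSat I π (.atom .star .multi o' m') →
      KSat I ((n, o, n') :: π) (.atom m .multi o' m')
  | comp : KSat I π₁ P₁ → KSat I π₂ P₂ → KSat I (π₁ ++ π₂) (.comp P₁ P₂)

/-- Node refinement: `n ⪯_n n` and `n ⪯_n *`. -/
def NRef : NodePat N → NodePat N → Prop := fun a b => a = b ∨ b = .star

/-- Arrow refinement: reflexivity and `> ⪯_a +>`. -/
inductive ARef : Arrow → Arrow → Prop where
  | refl (a) : ARef a a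
  | up : ARef .single .multi

/-- Kind refinement `⪯_P`: rules (comp), (P-1)–(P-4), closed under reflexivity
and transitivity. -/
inductive KRef : Kind N O → Kind N O → Prop where
  | refl (P) : KRef P P
  | trans : KRef P Q → KRef Q R → KRef P R
  | comp : KRef P₁ P₁' → KRef P₂ P₂' → KRef (.comp P₁ P₂) (.comp P₁' P₂')
  | atom : NRef n₁ n₁' → NRef n₂ n₂' → ARef w w' → o ⊆ o' →
      KRef (.atom n₁ w o n₂) (.atom n₁' w' o' n₂')
  | p2 : NRef n₁ n₁' → NRef n₂ n₂' → o₁ ⊆ o₁' → o₁ ⊆ o₂' → o₂ ⊆ o₂' →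
      KRef (.comp (.atom n₁ .multi o₁ .star) (.atom .star .single o₂ n₂))
           (.comp (.atom n₁' .single o₁' .star) (.atom .star .multi o₂' n₂'))
  | p3 : NRef n₁ n₁' → NRef n₂ n₂' → o₁ ⊆ o' → o₂ ⊆ o' →
      KRef (.comp (.atom n₁ .multi o₁ .star) (.atom .star .multi o₂ n₂))
           (.atom n₁' .multi o' n₂')
  | p4 : NRef n₁ n₁' → NRef n₂ n₂' → o₁ ⊆ o₁' → o₂ ⊆ o₂' → o₂ ⊆ o₁' →
      KRef (.comp (.atom n₁ .single o₁ .star) (.atom .star .multi o₂ n₂))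
           (.comp (.atom n₁' .multi o₁' .star) (.atom .star .single o₂' n₂'))

/-- IFL requirements `R ::= P | ~P | P : P'`. -/
inductive Req (N O : Type) where
  | ex : Kind N O → Req N O
  | no : Kind N O → Req N O
  | constr : Kind N O → Kind N O → Req N O

/-- Validity `I ⊨ R`. -/
def Valid (I : IFD N O) : Req N O → Prop
  | .ex P => ∃ π, PathIn I π ∧ KSat I π P
  | .no P => ¬ ∃ π, PathIn I π ∧ KSat I π P
  | .constr P P' => ∀ π, PathIn I π → KSat I π P → KSat I π P'

/-- Requirement refinement `⪯`: rules (R-1)–(R-3), closed under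
reflexivity and transitivity. -/
inductive RRef : Req N O → Req N O → Prop where
  | refl (R) : RRef R R
  | trans : RRef R₁ R₂ → RRef R₂ R₃ → RRef R₁ R₃
  | ex : KRef P P' → RRef (.ex P) (.ex P')
  | no : KRef P P' → RRef (.no P') (.no P)
  | constr : KRef P₁ P₁' → KRef P₂ P₂' → RRef (.constr P₁' P₂) (.constr P₁ P₂')

/-- The equivalent, right-linear grammar of kinds:
`P ::= n [o]> n' | n +[o]> n' | (n [o]> n') P | (n +[o]> n') P`. -/
inductive LKind (N O : Type) where
  | step : NodePat N → Set O → NodePat N → LKind N O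
  | plus : NodePat N → Set O → NodePat N → LKind N O
  | stepC : NodePat N → Set O → NodePat N → LKind N O → LKind N O
  | plusC : NodePat N → Set O → NodePat N → LKind N O → LKind N O

/-- Kind satisfaction `π ▷_I P` for the right-linear grammar. -/
inductive LSat (I : IFD N O) : List (Arc N O) → LKind N O → Prop where
  | step : NodePat.mat I m n → NodePat.mat I m' n' → (o ∩ o').Nonempty →
      LSat I [(n, o, n')] (.step m o' m')
  | plusBase : LSat I [(n, o, n')] (.step m o' m') →
      LSat I [(n, o, n')] (.plus m o' m')
  | plusStep : LSat I [(n, o, n')] (.step m o' .star) →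
      LSat I π (.plus .star o' m') →
      LSat I ((n, o, n') :: π) (.plus m o' m')
  | stepC : LSat I [(n, o, n')] (.step m o' .star) → LSat I π P →
      LSat I ((n, o, n') :: π) (.stepC m o' m' P)
  | plusCBase : LSat I π (.stepC m o' m' P) → LSat I π (.plusC m o' m' P)
  | plusCStep : LSat I [(n, o, n')] (.step m o' .star) →
      LSat I π (.plusC .star o' .star P) →
      LSat I ((n, o, n') :: π) (.plusC m o' m' P)

/-- LTL formulas over atomic propositions `Pr` and actions `A`;
`acts o` stands for the disjunction `⋁_{op ∈ o} (op)`. -/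
inductive LTL (Pr A : Type) where
  | tt : LTL Pr A
  | atom : Pr → LTL Pr A
  | acts : Set A → LTL Pr A
  | and : LTL Pr A → LTL Pr A → LTL Pr A
  | or : LTL Pr A → LTL Pr A → LTL Pr A
  | not : LTL Pr A → LTL Pr A
  | next : LTL Pr A → LTL Pr A
  | untl : LTL Pr A → LTL Pr A → LTL Pr A

/-- A finite KTS path: a state followed by a list of (action, state) steps. -/
structure FinPath (S A : Type) where
  first : S
  rest : List (A × S)

/-- Drop the first `k` transitions of a finite path. -/
def FinPath.drop : FinPath S A → ℕ → FinPath S A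
  | w, 0 => w
  | ⟨s, []⟩, _ + 1 => ⟨s, []⟩
  | ⟨_, (_, s') :: r⟩, k + 1 => FinPath.drop ⟨s', r⟩ k

/-- Finite-path LTL semantics `w ⊨_l φ` with labeling `L`. -/
def FSat (L : S → Set Pr) : LTL Pr A → FinPath S A → Prop
  | .tt, _ => True
  | .atom p, w => p ∈ L w.first
  | .acts o, w => ∃ a s r, w.rest = (a, s) :: r ∧ a ∈ o
  | .and φ ψ, w => FSat L φ w ∧ FSat L ψ w
  | .or φ ψ, w => FSat L φ w ∨ FSat L ψ w
  | .not φ, w => ¬ FSat L φ w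
  | .next φ, w => ∃ a s r, w.rest = (a, s) :: r ∧ FSat L φ ⟨s, r⟩
  | .untl φ ψ, w => ∃ k, k ≤ w.rest.length ∧ FSat L ψ (w.drop k) ∧
      ∀ j < k, FSat L φ (w.drop j)

/-- The LTL encoding `enc(P)` of flow kinds (finite-path version,
with end marker `¬X(true)`). -/
def encK : LKind N O → LTL (NodePat N) O
  | .step n o n' =>
      .and (.atom n) (.and (.acts o) (.next (.and (.atom n') (.not (.next .tt)))))
  | .plus n o n' =>
      .and (.atom n) (.and (.acts o)
        (.next (.untl (.acts o) (.and (.atom n') (.not (.next .tt))))))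
  | .stepC n o _ P => .and (.atom n) (.and (.acts o) (.next (encK P)))
  | .plusC n o _ P =>
      .and (.atom n) (.and (.acts o) (.next (.untl (.acts o) (encK P))))

/-- The labeling `Λ` of the KTS of `I`: `M ∈ Λ(n)` iff `n ∈ ta(M)`
(with the wildcard true everywhere). -/
def labelOf (I : IFD N O) : N → Set (NodePat N) :=
  fun n => {p | NodePat.mat I p n}

/-- `encRest π r`: the steps `r` traverse the arcs `π` choosing one
operation from each arc's operation set. -/
def encRest : List (Arc N O) → List (O × N) → Prop
  | [], [] => True
  | (_, o, n') :: π, (op, s) :: r => op ∈ o ∧ s = n' ∧ encRest π r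
  | _, _ => False

/-- `w ∈ enc(π)` : the KTS path `w` results from the diagram path `π`
by choosing one operation from each arc's operation set. -/
def encPath (π : List (Arc N O)) (w : FinPath N O) : Prop :=
  match π with
  | [] => False
  | (n, _, _) :: _ => w.first = n ∧ encRest π w.rest

/-- Auxiliary for `π_w`. -/
def diagOf : N → List (O × N) → List (Arc N O)
  | _, [] => []
  | s, (op, s') :: r => (s, ({op} : Set O), s') :: diagOf s' r

/-- `π_w`: the diagram path obtained from a KTS path by replacing each
action `op` with the singleton `{op}`. -/
def FinPath.toDiagram (w : FinPath N O) : List (Arc N O) := diagOf w.first w.rest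

/-- A transition of the KTS of `I`: `E' = {(n, op, n') | (n,o,n') ∈ E, op ∈ o}`. -/
def ktsStep (I : IFD N O) (s : N) (op : O) (s' : N) : Prop :=
  ∃ o, (s, o, s') ∈ I.E ∧ op ∈ o

def ktsRest (I : IFD N O) : N → List (O × N) → Prop
  | _, [] => True
  | s, (op, s') :: r => ktsStep I s op s' ∧ ktsRest I s' r

/-- `w` is a (finite) path of the KTS of `I`. -/
def KTSPath (I : IFD N O) (w : FinPath N O) : Prop := ktsRest I w.first w.rest

/-- `K ⊨_l φ`: every finite path of the KTS of `I` satisfies `φ`. -/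
def KModels (I : IFD N O) (φ : LTL (NodePat N) O) : Prop :=
  ∀ w, KTSPath I w → FSat (labelOf I) φ w

/-- IFL requirements over right-linear kinds. -/
inductive LReq (N O : Type) where
  | ex : LKind N O → LReq N O
  | no : LKind N O → LReq N O
  | constr : LKind N O → LKind N O → LReq N O

/-- Validity `I ⊨ R` for right-linear requirements. -/
def LValid (I : IFD N O) : LReq N O → Prop
  | .ex P => ∃ π, PathIn I π ∧ LSat I π P
  | .no P => ¬ ∃ π, PathIn I π ∧ LSat I π P
  | .constr P P' => ∀ π, PathIn I π → LSat I π P → LSat I π P'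

/-- Satisfaction `K ⊢ R` in the finite-path KTS semantics. -/
def KEnt (I : IFD N O) : LReq N O → Prop
  | .ex P => ¬ KModels I (.not (encK P))
  | .no P => KModels I (.not (encK P))
  | .constr P P' => KModels I (.or (.not (encK P)) (encK P'))

/-- Infinite KTS paths. -/
structure InfPath (S A : Type) where
  state : ℕ → S
  act : ℕ → A

def InfPath.drop (w : InfPath S A) (k : ℕ) : InfPath S A :=
  ⟨fun i => w.state (i + k), fun i => w.act (i + k)⟩

/-- Infinite-path LTL semantics. -/
def ISat (L : S → Set Pr) : LTL Pr A → InfPath S A → Prop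
  | .tt, _ => True
  | .atom p, w => p ∈ L (w.state 0)
  | .acts o, w => w.act 0 ∈ o
  | .and φ ψ, w => ISat L φ w ∧ ISat L ψ w
  | .or φ ψ, w => ISat L φ w ∨ ISat L ψ w
  | .not φ, w => ¬ ISat L φ w
  | .next φ, w => ISat L φ (w.drop 1)
  | .untl φ ψ, w => ∃ k, ISat L ψ (w.drop k) ∧ ∀ j < k, ISat L φ (w.drop j)

/-- Atomic propositions for the sink-extended KTS: node patterns plus
the distinguished proposition `ι`. -/
abbrev SProp (N : Type) := NodePat N ⊕ Unit

/-- Labeling of the sink-extended KTS: the sink (`none`) is labeled only by `ι`. -/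
def labelι (I : IFD N O) : Option N → Set (SProp N)
  | some n => {p | ∃ q, p = Sum.inl q ∧ NodePat.mat I q n}
  | none => {Sum.inr ()}

/-- The encoding `enc_ι(P)` of flow kinds for the sink-extended KTS:
identical to `enc` except that `¬X(true)` is replaced by `X(ι)`. -/
def encι : LKind N O → LTL (SProp N) O
  | .step n o n' =>
      .and (.atom (.inl n)) (.and (.acts o)
        (.next (.and (.atom (.inl n')) (.next (.atom (.inr ()))))))
  | .plus n o n' =>
      .and (.atom (.inl n)) (.and (.acts o)
        (.next (.untl (.acts o) (.and (.atom (.inl n')) (.next (.atom (.inr ())))))))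
  | .stepC n o _ P => .and (.atom (.inl n)) (.and (.acts o) (.next (encι P)))
  | .plusC n o _ P =>
      .and (.atom (.inl n)) (.and (.acts o) (.next (.untl (.acts o) (encι P))))

/-- The states of a finite path. -/
def FinPath.states (w : FinPath S A) : List S := w.first :: w.rest.map Prod.snd

/-- `w·ι^ω`: the finite path `w` followed by the sink forever
(with arbitrary operation labels `ops` into `ι`). -/
def appendSink (w : FinPath N O) (ops : ℕ → O) : InfPath (Option N) O where
  state := fun i => w.states[i]?
  act := fun i => if h : i < w.rest.length then (w.rest.get ⟨i, h⟩).1 else ops i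

/-- Transitions of the sink-extended KTS `K_ι`: the transitions of `K`,
transitions from every state to the sink with every operation, and the
self-loop on the sink. -/
def sinkStep (I : IFD N O) : Option N → O → Option N → Prop
  | some s, op, some s' => ktsStep I s op s'
  | _, _, none => True
  | none, _, some _ => False

/-- `w` is an infinite path of the sink-extended KTS `K_ι`. -/
def KιPath (I : IFD N O) (w : InfPath (Option N) O) : Prop :=
  ∀ i, sinkStep I (w.state i) (w.act i) (w.state (i + 1))

/-- `K_ι ⊨_l φ`: every infinite path of `K_ι` satisfies `φ`. -/
def KιModels (I : IFD N O) (φ : LTL (SProp N) O) : Prop :=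
  ∀ w, KιPath I w → ISat (labelι I) φ w

/-- Satisfaction `K_ι ⊢ R` in the infinite-path, sink-extended semantics. -/
def KιEnt (I : IFD N O) : LReq N O → Prop
  | .ex P => ¬ KιModels I (.not (encι P))
  | .no P => KιModels I (.not (encι P))
  | .constr P P' => KιModels I (.or (.not (encι P)) (encι P'))

/-- The leading node constraint of a kind. -/
def LKind.firstNode : LKind N O → NodePat N
  | .step n _ _ => n
  | .plus n _ _ => n
  | .stepC n _ _ _ => n
  | .plusC n _ _ _ => n

/-- The leading operation set of a kind. -/
def LKind.firstOps : LKind N O → Set O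
  | .step _ o _ => o
  | .plus _ o _ => o
  | .stepC _ o _ _ => o
  | .plusC _ o _ _ => o

end IFCIL


section SinkAux

variable {N O : Type}

lemma states_length (v : FinPath N O) : v.states.length = v.rest.length + 1 := by
  simp [FinPath.states]

lemma drop_states : ∀ (k : ℕ) (v : FinPath N O), k ≤ v.rest.length →
    (v.drop k).states = v.states.drop k := by
  intro k
  induction k with
  | zero => intro v _; simp [FinPath.drop]
  | succ k ih =>
    rintro ⟨s, r⟩ h
    cases r with
    | nil => simp at h
    | cons p r' =>
      obtain ⟨a, t⟩ := p
      show (FinPath.drop ⟨t, r'⟩ k).states = _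
      rw [ih ⟨t, r'⟩ (by simpa using h)]
      simp [FinPath.states]

lemma drop_rest : ∀ (k : ℕ) (v : FinPath N O), k ≤ v.rest.length →
    (v.drop k).rest = v.rest.drop k := by
  intro k
  induction k with
  | zero => intro v _; simp [FinPath.drop]
  | succ k ih =>
    rintro ⟨s, r⟩ h
    cases r with
    | nil => simp at h
    | cons p r' =>
      obtain ⟨a, t⟩ := p
      show (FinPath.drop ⟨t, r'⟩ k).rest = _
      rw [ih ⟨t, r'⟩ (by simpa using h)]
      simp

lemma drop_first (k : ℕ) (v : FinPath N O) (h : k ≤ v.rest.length) :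
    some ((v.drop k).first) = v.states[k]? := by
  have h1 : (v.drop k).states[0]? = (v.states.drop k)[0]? := by rw [drop_states k v h]
  simpa [FinPath.states, List.getElem?_drop] using h1

lemma appendSink_state (v : FinPath N O) (ops : ℕ → O) (i : ℕ) :
    (appendSink v ops).state i = v.states[i]? := rfl

lemma appendSink_drop (v : FinPath N O) (ops : ℕ → O) (k : ℕ) (hk : k ≤ v.rest.length) :
    (appendSink v ops).drop k = appendSink (v.drop k) (fun i => ops (i + k)) := by
  have hrest := drop_rest k v hk
  have hstates := drop_states k v hk
  simp only [InfPath.drop, appendSink]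
  congr 1
  · funext i
    rw [hstates, List.getElem?_drop, Nat.add_comm]
  · funext i
    rw [hrest]
    by_cases h : i + k < v.rest.length
    · have h' : i < (v.rest.drop k).length := by simp; omega
      rw [dif_pos h, dif_pos h']
      congr 1
      simp [List.getElem_drop]
      congr 1
      omega
    · have h' : ¬ i < (v.rest.drop k).length := by simp; omega
      rw [dif_neg h, dif_neg h']

lemma labelι_inl_some (I : IFD N O) (p : NodePat N) (s : N) :
    Sum.inl p ∈ labelι I (some s) ↔ NodePat.mat I p s := by
  simp [labelι]

lemma labelι_inl_none (I : IFD N O) (p : NodePat N) :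
    Sum.inl p ∉ labelι I (none : Option N) := by
  simp [labelι]

lemma labelι_inr (I : IFD N O) (x : Option N) :
    Sum.inr () ∈ labelι I x ↔ x = none := by
  cases x <;> simp [labelι]

end SinkAux


lemma encι_state0 {N O : Type} (I : IFD N O) (P : LKind N O) (u : InfPath (Option N) O)
    (h : ISat (labelι I) (encι P) u) : ∃ s, u.state 0 = some s := by
  cases P <;>
  · obtain ⟨h1, -⟩ := h
    rcases hx : u.state 0 with _ | s
    · simp only [ISat] at h1
      rw [hx] at h1
      exact absurd h1 (labelι_inl_none I _)
    · exact ⟨s, rfl⟩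

lemma encι_none {N O : Type} (I : IFD N O) (P : LKind N O) (u : InfPath (Option N) O)
    (hx : u.state 0 = none) : ¬ ISat (labelι I) (encι P) u := by
  intro h
  obtain ⟨s, hs⟩ := encι_state0 I P u h
  rw [hx] at hs; cases hs

lemma encι_eventually_none {N O : Type} (I : IFD N O) :
    ∀ (P : LKind N O) (u : InfPath (Option N) O),
    ISat (labelι I) (encι P) u → ∃ k, u.state k = none := by
  intro P
  induction P with
  | step n o n' =>
    intro u h
    obtain ⟨-, -, -, h2⟩ := h
    refine ⟨2, ?_⟩
    have := (labelι_inr I _).mp h2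
    simpa [InfPath.drop] using this
  | plus n o n' =>
    intro u h
    obtain ⟨-, -, k, ⟨-, h2⟩, -⟩ := h
    have := (labelι_inr I _).mp h2
    simp [InfPath.drop] at this
    exact ⟨_, this⟩
  | stepC n o n' P ih =>
    intro u h
    obtain ⟨-, -, h2⟩ := h
    obtain ⟨k, hk⟩ := ih _ h2
    simp [InfPath.drop] at hk
    exact ⟨_, hk⟩
  | plusC n o n' P ih =>
    intro u h
    obtain ⟨-, -, k, h2, -⟩ := h
    obtain ⟨j, hj⟩ := ih _ h2
    simp [InfPath.drop] at hj
    exact ⟨_, hj⟩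

lemma none_stable {N O : Type} (I : IFD N O) (w : InfPath (Option N) O)
    (hw : KιPath I w) {i : ℕ} (hi : w.state i = none) :
    ∀ j, i ≤ j → w.state j = none := by
  have step : ∀ j, w.state j = none → w.state (j + 1) = none := by
    intro j hj
    have := hw j
    rw [hj] at this
    rcases hx : w.state (j + 1) with _ | s
    · rfl
    · rw [hx] at this
      exact absurd this (by simp [sinkStep])
  intro j hj
  induction j, hj using Nat.le_induction with
  | base => exact hi
  | succ j hij ih => exact step j ih


lemma appendSink_act_lt {N O : Type} (v : FinPath N O) (ops : ℕ → O) {i : ℕ}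
    (hi : i < v.rest.length) :
    (appendSink v ops).act i = (v.rest.get ⟨i, hi⟩).1 := by
  simp [appendSink, dif_pos hi]

lemma endmark_equiv {N O : Type} (I : IFD N O) (n' : NodePat N) (v : FinPath N O)
    (ops : ℕ → O) (k : ℕ) (hk : k ≤ v.rest.length) :
    FSat (labelOf I) (.and (.atom n') (.not (.next .tt))) (v.drop k) ↔
      ISat (labelι I) (.and (.atom (.inl n')) (.next (.atom (.inr ()))))
        ((appendSink v ops).drop k) := by
  have hfirst : (appendSink v ops).state (0 + k) = some ((v.drop k).first) := by
    rw [appendSink_state]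
    simpa using (drop_first k v hk).symm
  have hrest := drop_rest k v hk
  simp only [FSat, ISat, InfPath.drop]
  rw [hfirst, labelι_inl_some, labelι_inr, appendSink_state]
  constructor
  · rintro ⟨h1, h2⟩
    refine ⟨h1, ?_⟩
    have hnil : (v.drop k).rest = [] := by
      rcases hr : (v.drop k).rest with _ | ⟨⟨a, s⟩, r⟩
      · rfl
      · exact absurd ⟨a, s, r, hr, trivial⟩ h2
    have hlen : v.rest.length ≤ k := by
      rw [hrest] at hnil
      simpa using hnil
    apply List.getElem?_eq_none
    rw [states_length]; omega
  · rintro ⟨h1, h2⟩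
    refine ⟨h1, ?_⟩
    have hlen : v.states.length ≤ 0 + 1 + k := List.getElem?_eq_none_iff.mp h2
    rw [states_length] at hlen
    rintro ⟨a, s, r, hr, -⟩
    rw [hrest] at hr
    rw [List.drop_eq_nil_of_le (by omega)] at hr
    cases hr

lemma untl_equiv {N O : Type} (I : IFD N O) (o : Set O) (ψ : LTL (NodePat N) O)
    (ψ' : LTL (SProp N) O) (v : FinPath N O) (ops : ℕ → O)
    (hψ : ∀ k, k ≤ v.rest.length →
      (FSat (labelOf I) ψ (v.drop k) ↔ ISat (labelι I) ψ' ((appendSink v ops).drop k)))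
    (hnone : ∀ u : InfPath (Option N) O, u.state 0 = none → ¬ ISat (labelι I) ψ' u) :
    FSat (labelOf I) (.untl (.acts o) ψ) v ↔
      ISat (labelι I) (.untl (.acts o) ψ') (appendSink v ops) := by
  constructor
  · rintro ⟨k, hk, hψk, hφ⟩
    refine ⟨k, (hψ k hk).mp hψk, ?_⟩
    intro j hj
    obtain ⟨a, s, r, hr, ha⟩ := hφ j hj
    rw [drop_rest j v (by omega)] at hr
    have hj' : j < v.rest.length := by
      by_contra hc
      rw [List.drop_eq_nil_of_le (by omega)] at hr
      cases hr
    have hji : v.rest[j]? = some (a, s) := by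
      have h0 := @List.getElem?_drop _ v.rest j 0
      rw [hr] at h0
      simpa using h0.symm
    show ISat (labelι I) (LTL.acts o) ((appendSink v ops).drop j)
    simp only [ISat, InfPath.drop, Nat.zero_add]
    rw [appendSink_act_lt v ops hj']
    have : v.rest.get ⟨j, hj'⟩ = (a, s) := by
      have := List.getElem?_eq_getElem (l := v.rest) hj'
      rw [hji] at this
      exact (Option.some.injEq _ _ ▸ this.symm :)
    rw [this]
    exact ha
  · rintro ⟨k, hψk, hφ⟩
    have hk : k ≤ v.rest.length := by
      by_contra hc
      refine hnone ((appendSink v ops).drop k) ?_ hψk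
      show (appendSink v ops).state (0 + k) = none
      rw [appendSink_state]
      apply List.getElem?_eq_none
      rw [states_length]; omega
    refine ⟨k, hk, (hψ k hk).mpr hψk, ?_⟩
    intro j hj
    have hj' : j < v.rest.length := by omega
    have ha := hφ j hj
    simp only [ISat, InfPath.drop, Nat.zero_add] at ha
    rw [appendSink_act_lt v ops hj'] at ha
    refine ⟨(v.rest.get ⟨j, hj'⟩).1, (v.rest.get ⟨j, hj'⟩).2, v.rest.drop (j + 1), ?_, ha⟩
    rw [drop_rest j v (le_of_lt hj')]
    rw [List.drop_eq_getElem_cons hj']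
    simp


lemma appendSink_state_none {N O : Type} (v : FinPath N O) (ops : ℕ → O) {i : ℕ}
    (hi : v.rest.length < i) : (appendSink v ops).state i = none := by
  rw [appendSink_state]
  apply List.getElem?_eq_none
  rw [states_length]; omega

lemma frame_equiv {N O : Type} (I : IFD N O) (n : NodePat N) (o : Set O)
    (χ : LTL (NodePat N) O) (χ' : LTL (SProp N) O) (v : FinPath N O) (ops : ℕ → O)
    (hχnil : v.rest = [] → ¬ ISat (labelι I) χ' ((appendSink v ops).drop 1))
    (hχ : ∀ a s r, v.rest = (a, s) :: r →
      (FSat (labelOf I) χ ⟨s, r⟩ ↔ ISat (labelι I) χ' ((appendSink v ops).drop 1))) :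
    FSat (labelOf I) (.and (.atom n) (.and (.acts o) (.next χ))) v ↔
      ISat (labelι I) (.and (.atom (.inl n)) (.and (.acts o) (.next χ'))) (appendSink v ops) := by
  obtain ⟨f, rest⟩ := v
  cases rest with
  | nil =>
    apply iff_of_false
    · rintro ⟨-, -, a, s, r, h, -⟩
      cases h
    · rintro ⟨-, -, h⟩
      exact hχnil rfl h
  | cons p r =>
    obtain ⟨a, s⟩ := p
    have hact : (appendSink (⟨f, (a, s) :: r⟩ : FinPath N O) ops).act 0 = a := by
      rw [appendSink_act_lt _ _ (by simp : 0 < ((a, s) :: r).length)]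
      rfl
    have hst : (appendSink (⟨f, (a, s) :: r⟩ : FinPath N O) ops).state 0 = some f := rfl
    have hiff := hχ a s r rfl
    simp only [FSat, ISat] at hiff ⊢
    rw [hact, hst, labelι_inl_some]
    constructor
    · rintro ⟨h1, ⟨a', s', r', he, ha⟩, a'', s'', r'', he2, h3⟩
      obtain ⟨h, rfl⟩ := List.cons_eq_cons.mp he
      obtain ⟨rfl, rfl⟩ := Prod.mk.inj h
      obtain ⟨h', rfl⟩ := List.cons_eq_cons.mp he2
      obtain ⟨rfl, rfl⟩ := Prod.mk.inj h'
      exact ⟨h1, ha, hiff.mp h3⟩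
    · rintro ⟨h1, h2, h3⟩
      exact ⟨h1, ⟨a, s, r, rfl, h2⟩, a, s, r, rfl, hiff.mpr h3⟩



lemma findrop_zero {N O : Type} (v : FinPath N O) : v.drop 0 = v := by
  simp [FinPath.drop]

lemma infdrop_zero {S A : Type} (u : InfPath S A) : u.drop 0 = u := rfl

lemma enc_iff {N O : Type} (I : IFD N O) :
    ∀ (P : LKind N O) (v : FinPath N O) (ops : ℕ → O),
    FSat (labelOf I) (encK P) v ↔ ISat (labelι I) (encι P) (appendSink v ops) := by
  intro P
  induction P with
  | step n o n' =>
    intro v ops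
    apply frame_equiv
    · intro hnil
      rintro ⟨h1, -⟩
      have hz : ((appendSink v ops).drop 1).state 0 = none := by
        show (appendSink v ops).state (0 + 1) = none
        exact appendSink_state_none v ops (by rw [hnil]; simp)
      simp only [ISat] at h1
      rw [hz] at h1
      exact labelι_inl_none I _ h1
    · intro a s r hr
      obtain ⟨f, rest⟩ := v
      simp only at hr
      subst hr
      rw [appendSink_drop _ _ 1 (by simp),
        show (FinPath.drop ⟨f, (a, s) :: r⟩ 1 : FinPath N O) = ⟨s, r⟩ by simp [FinPath.drop]]
      have he := endmark_equiv I n' ⟨s, r⟩ (fun i => ops (i + 1)) 0 (Nat.zero_le _)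
      rwa [findrop_zero, infdrop_zero] at he
  | plus n o n' =>
    intro v ops
    apply frame_equiv
    · intro hnil
      rintro ⟨k, ⟨h1, -⟩, -⟩
      have hz : (((appendSink v ops).drop 1).drop k).state 0 = none := by
        show (appendSink v ops).state (0 + k + 1) = none
        exact appendSink_state_none v ops (by rw [hnil]; simp)
      simp only [ISat] at h1
      rw [hz] at h1
      exact labelι_inl_none I _ h1
    · intro a s r hr
      obtain ⟨f, rest⟩ := v
      simp only at hr
      subst hr
      rw [appendSink_drop _ _ 1 (by simp),
        show (FinPath.drop ⟨f, (a, s) :: r⟩ 1 : FinPath N O) = ⟨s, r⟩ by simp [FinPath.drop]]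
      refine untl_equiv I o _ _ ⟨s, r⟩ (fun i => ops (i + 1))
        (fun k hk => endmark_equiv I n' ⟨s, r⟩ _ k hk) ?_
      rintro u hu ⟨h1, -⟩
      simp only [ISat] at h1
      rw [hu] at h1
      exact labelι_inl_none I _ h1
  | stepC n o n' P ih =>
    intro v ops
    apply frame_equiv
    · intro hnil h
      refine encι_none I P _ ?_ h
      show (appendSink v ops).state (0 + 1) = none
      exact appendSink_state_none v ops (by rw [hnil]; simp)
    · intro a s r hr
      obtain ⟨f, rest⟩ := v
      simp only at hr
      subst hr
      rw [appendSink_drop _ _ 1 (by simp),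
        show (FinPath.drop ⟨f, (a, s) :: r⟩ 1 : FinPath N O) = ⟨s, r⟩ by simp [FinPath.drop]]
      exact ih ⟨s, r⟩ (fun i => ops (i + 1))
  | plusC n o n' P ih =>
    intro v ops
    apply frame_equiv
    · intro hnil
      rintro ⟨k, h1, -⟩
      refine encι_none I P _ ?_ h1
      show (appendSink v ops).state (0 + k + 1) = none
      exact appendSink_state_none v ops (by rw [hnil]; simp)
    · intro a s r hr
      obtain ⟨f, rest⟩ := v
      simp only at hr
      subst hr
      rw [appendSink_drop _ _ 1 (by simp),
        show (FinPath.drop ⟨f, (a, s) :: r⟩ 1 : FinPath N O) = ⟨s, r⟩ by simp [FinPath.drop]]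
      refine untl_equiv I o _ _ ⟨s, r⟩ (fun i => ops (i + 1))
        (fun k hk => ?_) (fun u hu => encι_none I P u hu)
      rw [appendSink_drop _ _ k hk]
      exact ih _ _


lemma appendSink_inj {N O : Type} {v v' : FinPath N O} {ops ops' : ℕ → O}
    (h : appendSink v ops = appendSink v' ops') : v = v' := by
  have hstate : ∀ i : ℕ, v.states[i]? = v'.states[i]? := by
    intro i
    have := congrArg (fun u => InfPath.state u i) h
    simpa [appendSink_state] using this
  have hstates : v.states = v'.states := List.ext_getElem? hstate
  have hlen : v.rest.length = v'.rest.length := by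
    have := congrArg List.length hstates
    rw [states_length, states_length] at this
    omega
  have hfirst : v.first = v'.first := by
    have := congrArg (fun l => l[0]?) hstates
    simpa [FinPath.states] using this
  have hrest : v.rest = v'.rest := by
    apply List.ext_getElem hlen
    intro i h1 h2
    have hact := congrArg (fun u => InfPath.act u i) h
    simp only [appendSink, dif_pos h1, dif_pos h2] at hact
    have hsnd : (v.rest.get ⟨i, h1⟩).2 = (v'.rest.get ⟨i, h2⟩).2 := by
      have hi := hstate (i + 1)
      simp only [FinPath.states, List.getElem?_cons_succ, List.getElem?_map,
        List.getElem?_eq_getElem h1, List.getElem?_eq_getElem h2, Option.map_some] at hi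
      exact Option.some.inj hi
    exact Prod.ext hact hsnd
  obtain ⟨f, r⟩ := v
  obtain ⟨f', r'⟩ := v'
  simp_all

lemma ktsRest_extract {N O : Type} (I : IFD N O) :
    ∀ (r : List (O × N)) (s : N) (u : InfPath (Option N) O),
    KιPath I u → u.state 0 = some s →
    (∀ (i : ℕ) (p : O × N), r[i]? = some p → u.act i = p.1 ∧ u.state (i + 1) = some p.2) →
    ktsRest I s r := by
  intro r
  induction r with
  | nil => intro s u _ _ _; trivial
  | cons p r ih =>
    obtain ⟨a, t⟩ := p
    intro s u hu h0 hr
    obtain ⟨ha, h1⟩ := hr 0 (a, t) (by simp)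
    refine ⟨?_, ?_⟩
    · have hstep := hu 0
      rw [h0, h1, ha] at hstep
      exact hstep
    · refine ih t (u.drop 1) (fun i => hu (i + 1)) h1 ?_
      intro i q hq
      exact hr (i + 1) q (by simpa using hq)

/-- If an infinite path `w` of the sink-extended KTS `K_ι`
satisfies `enc_ι(P)`, then there exists a unique finite path `ẇ` of `K`
such that `ẇ` satisfies `enc(P)` and `w = ẇ·ι^ω`. -/
theorem sink_to_fin {N O : Type} (I : IFD N O) (w : InfPath (Option N) O)
    (hw : KιPath I w) (P : LKind N O)
    (h : ISat (labelι I) (encι P) w) :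
    ∃! wdot : FinPath N O, KTSPath I wdot ∧ FSat (labelOf I) (encK P) wdot ∧
      ∃ ops : ℕ → O, w = appendSink wdot ops := by
  classical
  obtain ⟨s0, hs0⟩ := encι_state0 I P w h
  have hex : ∃ m, w.state m = none := encι_eventually_none I P w h
  set k := Nat.find hex with hkdef
  have hk : w.state k = none := Nat.find_spec hex
  have hmin : ∀ j, j < k → w.state j ≠ none := fun j hj => Nat.find_min hex hj
  have hpos : 1 ≤ k := by
    rcases Nat.eq_zero_or_pos k with h0 | h0
    · rw [h0] at hk; rw [hk] at hs0; exact absurd hs0 (by simp)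
    · exact h0
  set f : ℕ → O × N := fun i => (w.act i, (w.state (i + 1)).getD s0) with hfdef
  set wdot : FinPath N O := ⟨s0, (List.range (k - 1)).map f⟩ with hwdot
  have hlen : wdot.rest.length = k - 1 := by simp [hwdot]
  have hst : ∀ i : ℕ, wdot.states[i]? = w.state i := by
    intro i
    cases i with
    | zero => simpa [hwdot, FinPath.states] using hs0.symm
    | succ i =>
      simp only [hwdot, FinPath.states, List.getElem?_cons_succ, List.map_map,
        List.getElem?_map]
      by_cases hi : i < k - 1
      · rw [List.getElem?_range hi]
        have hne : w.state (i + 1) ≠ none := hmin (i + 1) (by omega)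
        obtain ⟨t, ht⟩ := Option.ne_none_iff_exists'.mp hne
        simp [hfdef, ht]
      · rw [List.getElem?_eq_none (by simpa using hi)]
        have : w.state (i + 1) = none :=
          none_stable I w hw hk (i + 1) (by omega)
        rw [this]
        rfl
  have hget : ∀ (i : ℕ) (hi : i < wdot.rest.length),
      wdot.rest.get ⟨i, hi⟩ = f i := by
    intro i hi
    have hi' : i < k - 1 := by rwa [hlen] at hi
    simp [hwdot, List.getElem_map, List.getElem_range]
  have hw_eq : w = appendSink wdot w.act := by
    obtain ⟨ws, wa⟩ := w
    show InfPath.mk ws wa = InfPath.mk (fun i => wdot.states[i]?)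
      (fun i => if h : i < wdot.rest.length then (wdot.rest.get ⟨i, h⟩).1 else wa i)
    rw [InfPath.mk.injEq]
    constructor
    · funext i
      exact (hst i).symm
    · funext i
      by_cases hi : i < wdot.rest.length
      · rw [dif_pos hi, hget i hi]
      · rw [dif_neg hi]
  have hrest_spec : ∀ (i : ℕ) (p : O × N), wdot.rest[i]? = some p →
      w.act i = p.1 ∧ w.state (i + 1) = some p.2 := by
    intro i p hp
    have hi : i < k - 1 := by
      by_contra hc
      rw [List.getElem?_eq_none (by simpa [hlen] using hc)] at hp
      cases hp
    have hp' : p = f i := by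
      rw [hwdot] at hp
      simp only [List.getElem?_map, List.getElem?_range hi, Option.map_some] at hp
      exact (Option.some.inj hp).symm
    subst hp'
    refine ⟨rfl, ?_⟩
    have hne : w.state (i + 1) ≠ none := hmin (i + 1) (by omega)
    obtain ⟨t, ht⟩ := Option.ne_none_iff_exists'.mp hne
    simp [hfdef, ht]
  have hkts : KTSPath I wdot := ktsRest_extract I wdot.rest s0 w hw hs0 hrest_spec
  have hfsat : FSat (labelOf I) (encK P) wdot := by
    apply (enc_iff I P wdot w.act).mpr
    rwa [← hw_eq]
  refine ⟨wdot, ⟨hkts, hfsat, w.act, hw_eq⟩, ?_⟩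
  rintro y ⟨-, -, ops', hy⟩
  exact appendSink_inj ((hy.symm.trans hw_eq) :)
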